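/- arXiv:2605.03972 — 4 statements merged into one kernel-verified Lean document; each statement's English description precedes it below -/
import Mathlib

section
/- Let F_q be a finite field, let h ∈ F_q[x] be a monic irreducible polynomial of degree D with D ≥ 2 (so h(a) ≠ 0 for every a ∈ F_q), and let f ∈ F_q[x] with deg f < D. Let A ⊆ F_q be a subset with |A| = g, where D ≤ g ≤ q, and suppose that Π_{a∈A}(x − a) ≡ f(x) (mod h(x)) in F_q[x]. Then there exists a polynomial u ∈ F_q[x] with deg u < g − D such that u(a) = −f(a)/h(a) − a^{g−D} for every a ∈ A. Consequently, the received word y = (y_a)_{a∈F_q} ∈ F_q^{F_q} defined by y_a = −f(a)/h(a) − a^{g−D} satisfies d_H(y, RS[q, g−D]_q) ≤ q − g for the full-support Reed–Solomon code of dimension g − D. -/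
open Polynomial

/-- Construction of the Cheng–Wan received word: if `h` is monic irreducible of degree
`D ≥ 2`, `deg f < D`, `A ⊆ F_q` has size `g` with `D ≤ g ≤ q`, and
`Π_{a∈A}(x−a) ≡ f (mod h)`, then there is `u` with `deg u < g−D` and
`u(a) = −f(a)/h(a) − a^{g−D}` for all `a ∈ A`; consequently the received word
`y_a = −f(a)/h(a) − a^{g−D}` is within Hamming distance `q − g` of the full-support
Reed–Solomon code of dimension `g − D`. -/
theorem cheng_wan_received_word (F : Type*) [Field F] [Fintype F] [DecidableEq F]
    (q : ℕ) (hq : Fintype.card F = q)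
    (D g : ℕ) (hD : 2 ≤ D)
    (h : F[X]) (hmonic : h.Monic) (hirr : Irreducible h) (hdegh : h.natDegree = D)
    (f : F[X]) (hf : f.degree < (D : ℕ))
    (A : Finset F) (hA : A.card = g) (hDg : D ≤ g) (hgq : g ≤ q)
    (hcong : h ∣ (∏ a ∈ A, (X - C a)) - f) :
    (∃ u : F[X], u.degree < ((g - D : ℕ) : ℕ) ∧
      ∀ a ∈ A, u.eval a = - f.eval a / h.eval a - a ^ (g - D)) ∧
    (∃ w : F[X], w.degree < ((g - D : ℕ) : ℕ) ∧
      hammingDist (fun a : F => - f.eval a / h.eval a - a ^ (g - D))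
        (fun a : F => w.eval a) ≤ q - g) := by
  obtain ⟨Q, hQ⟩ := hcong
  set P : F[X] := ∏ a ∈ A, (X - C a) with hP
  have hPmonic : P.Monic := monic_prod_of_monic _ _ (fun a _ => monic_X_sub_C a)
  have hPdeg : P.natDegree = g := by
    rw [hP, natDegree_prod_of_monic _ _ (fun a _ => monic_X_sub_C a)]
    simp [hA]
  -- h has no roots
  have hroot : ∀ a : F, h.eval a ≠ 0 := by
    intro a ha
    obtain ⟨k, hk⟩ := dvd_iff_isRoot.mpr ha
    rcases hirr.isUnit_or_isUnit hk with hu | hu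
    · exact (not_isUnit_X_sub_C a) hu
    · obtain ⟨r, hr, rfl⟩ := Polynomial.isUnit_iff.mp hu
      have hr0 : r ≠ 0 := hr.ne_zero
      have : h.natDegree = 1 := by
        rw [hk, natDegree_mul (X_sub_C_ne_zero a) (by simpa using hr0)]
        simp
      omega
  -- P - f is monic of degree g
  have hfg : f.degree < ((g : ℕ) : WithBot ℕ) := lt_of_lt_of_le hf (by exact_mod_cast hDg)
  have hfP : f.degree < P.degree := by
    rw [degree_eq_natDegree hPmonic.ne_zero, hPdeg]; exact hfg
  have hPfdeg : (P - f).degree = (g : ℕ) := by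
    rw [degree_sub_eq_left_of_degree_lt hfP, degree_eq_natDegree hPmonic.ne_zero, hPdeg]
  have hPfne : P - f ≠ 0 := by
    intro h0
    rw [h0, degree_zero] at hPfdeg
    exact (by simp : (⊥ : WithBot ℕ) ≠ (g : ℕ)) hPfdeg
  have hPflc : (P - f).leadingCoeff = 1 := by
    rw [leadingCoeff, natDegree_eq_of_degree_eq_some hPfdeg, ← hPdeg]
    rw [coeff_sub, ← leadingCoeff, hPmonic.leadingCoeff,
      coeff_eq_zero_of_degree_lt (by rwa [degree_eq_natDegree hPmonic.ne_zero] at hfP), sub_zero]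
  have hQne : Q ≠ 0 := by
    intro h0; rw [h0, mul_zero] at hQ; exact hPfne hQ
  have hQdeg : Q.natDegree = g - D := by
    have := natDegree_eq_of_degree_eq_some hPfdeg
    rw [hQ, natDegree_mul hmonic.ne_zero hQne, hdegh] at this
    omega
  have hQmonic : Q.Monic := by
    have : (h * Q).leadingCoeff = 1 := by rw [← hQ]; exact hPflc
    rw [leadingCoeff_mul, hmonic.leadingCoeff, one_mul] at this
    exact this
  -- evaluation identity
  have heval : ∀ a ∈ A, Q.eval a = - f.eval a / h.eval a := by
    intro a haA
    have hPa : P.eval a = 0 := by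
      rw [hP, eval_prod]
      exact Finset.prod_eq_zero haA (by simp)
    have := congrArg (eval a) hQ
    simp only [eval_sub, eval_mul, hPa, zero_sub] at this
    rw [eq_div_iff (hroot a)]
    linear_combination -this
  set u : F[X] := Q - X ^ (g - D) with hu
  have hudeg : u.degree < ((g - D : ℕ) : WithBot ℕ) := by
    have : u.degree < Q.degree := by
      apply degree_sub_lt
      · rw [degree_eq_natDegree hQmonic.ne_zero, hQdeg, degree_X_pow]
      · exact hQmonic.ne_zero
      · rw [hQmonic.leadingCoeff, monic_X_pow _ |>.leadingCoeff]
    rwa [degree_eq_natDegree hQmonic.ne_zero, hQdeg] at this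
  have hueval : ∀ a ∈ A, u.eval a = - f.eval a / h.eval a - a ^ (g - D) := by
    intro a haA
    rw [hu, eval_sub, eval_pow, eval_X, heval a haA]
  refine ⟨⟨u, hudeg, hueval⟩, ⟨u, hudeg, ?_⟩⟩
  have hsub : (Finset.univ.filter fun a : F =>
      (- f.eval a / h.eval a - a ^ (g - D)) ≠ u.eval a) ⊆ Aᶜ := by
    intro a ha
    simp only [Finset.mem_filter, Finset.mem_univ, true_and] at ha
    simp only [Finset.mem_compl]
    intro haA
    exact ha (hueval a haA).symm
  calc hammingDist (fun a : F => - f.eval a / h.eval a - a ^ (g - D))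
        (fun a : F => u.eval a)
      ≤ Aᶜ.card := by
        rw [hammingDist]
        exact Finset.card_le_card hsub
    _ = q - g := by rw [Finset.card_compl, hA, hq]
end

section
/- Let q ≥ 2 be an integer and let τ be a real number with 0 < τ < 1 − 1/q. Then τ^⊥ also satisfies 0 < τ^⊥ < 1 − 1/q, and (τ^⊥)^⊥ = τ. -/
/-- The dual noise parameter `τ^⊥ = (√((q−1)(1−τ)/q) − √(τ/q))²`. -/
noncomputable def tauPerp (q : ℕ) (τ : ℝ) : ℝ :=
  (Real.sqrt (((q : ℝ) - 1) * (1 - τ) / q) - Real.sqrt (τ / q)) ^ 2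

lemma tauPerp_eq (q : ℕ) (hq : 1 ≤ (q : ℝ)) (τ : ℝ) (hτ : 0 ≤ τ) (hτ1 : τ ≤ 1) :
    tauPerp q τ
      = (Real.sqrt ((q : ℝ) - 1) * Real.sqrt (1 - τ) - Real.sqrt τ) ^ 2 / q := by
  have hq0 : (0 : ℝ) < q := by linarith
  unfold tauPerp
  rw [Real.sqrt_div (by nlinarith : (0:ℝ) ≤ ((q:ℝ)-1) * (1-τ)),
    Real.sqrt_div hτ, Real.sqrt_mul (by linarith : (0:ℝ) ≤ (q:ℝ)-1),
    div_sub_div_same, div_pow, Real.sq_sqrt hq0.le]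

/-- For `0 < τ < 1 − 1/q`, the dual parameter satisfies `0 < τ^⊥ < 1 − 1/q`
and `(τ^⊥)^⊥ = τ`. -/
theorem tauPerp_involutive (q : ℕ) (hq : 2 ≤ q) (τ : ℝ)
    (h0 : 0 < τ) (h1 : τ < 1 - 1 / q) :
    (0 < tauPerp q τ ∧ tauPerp q τ < 1 - 1 / q) ∧ tauPerp q (tauPerp q τ) = τ := by
  have hQ2 : (2 : ℝ) ≤ (q : ℝ) := by exact_mod_cast hq
  have hQ0 : (0 : ℝ) < q := by linarith
  have hinv : (q : ℝ) * (1 / q) = 1 := by field_simp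
  have hqτ : (q : ℝ) * τ < (q : ℝ) - 1 := by nlinarith
  have hτ1 : τ < 1 := by nlinarith
  set u := Real.sqrt τ with hu_def
  set v := Real.sqrt (1 - τ) with hv_def
  set s := Real.sqrt ((q : ℝ) - 1) with hs_def
  have hu : u ^ 2 = τ := Real.sq_sqrt h0.le
  have hv : v ^ 2 = 1 - τ := Real.sq_sqrt (by linarith)
  have hs : s ^ 2 = (q : ℝ) - 1 := Real.sq_sqrt (by linarith)
  have hu0 : 0 < u := Real.sqrt_pos.2 h0
  have hv0 : 0 < v := Real.sqrt_pos.2 (by linarith)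
  have hs0 : 0 < s := Real.sqrt_pos.2 (by linarith)
  have hkey : u < s * v := by nlinarith [mul_pos hs0 hv0]
  have hv1 : v < 1 := by nlinarith
  have hrw : tauPerp q τ = (s * v - u) ^ 2 / q :=
    tauPerp_eq q (by linarith) τ h0.le hτ1.le
  have hpos : 0 < tauPerp q τ := by
    rw [hrw]; exact div_pos (pow_pos (by linarith) 2) hQ0
  have hsvu : s * v - u < s := by nlinarith
  have hlt : tauPerp q τ < 1 - 1 / q := by
    rw [hrw]
    rw [div_lt_iff₀ hQ0]
    nlinarith
  refine ⟨⟨hpos, hlt⟩, ?_⟩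
  set τ' := tauPerp q τ with hτ'_def
  have hτ'le1 : τ' ≤ 1 := by nlinarith [hlt]
  have hrw2 : tauPerp q τ' = (s * Real.sqrt (1 - τ') - Real.sqrt τ') ^ 2 / q :=
    tauPerp_eq q (by linarith) τ' hpos.le hτ'le1
  have hsq : Real.sqrt ((q:ℝ)) ^ 2 = (q:ℝ) := Real.sq_sqrt hQ0.le
  have hsq0 : 0 < Real.sqrt ((q:ℝ)) := Real.sqrt_pos.2 hQ0
  have h1' : Real.sqrt τ' = (s * v - u) / Real.sqrt q := by
    rw [hrw, Real.sqrt_div (sq_nonneg _), Real.sqrt_sq (by linarith)]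
  have h2' : Real.sqrt (1 - τ') = (s * u + v) / Real.sqrt q := by
    have : 1 - τ' = ((s * u + v) / Real.sqrt q) ^ 2 := by
      rw [hrw, div_pow, hsq, eq_div_iff hQ0.ne', sub_mul, one_mul,
        div_mul_cancel₀ _ hQ0.ne']
      linear_combination (-(u ^ 2 + v ^ 2)) * hs - (q : ℝ) * hu - (q : ℝ) * hv
    rw [this, Real.sqrt_sq (by positivity)]
  rw [hrw2, h1', h2']
  have : s * ((s * u + v) / Real.sqrt q) - (s * v - u) / Real.sqrt q
      = (s ^ 2 + 1) * u / Real.sqrt q := by ring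
  rw [this, div_pow, hsq, hs]
  have hq' : ((q:ℝ) - 1 + 1) = (q:ℝ) := by ring
  have hfin : ((q:ℝ) * u) ^ 2 / q / q = u ^ 2 := by
    field_simp
  rw [hq', hfin, hu]
end

section
/- Let q = p^s be a prime power and let τ be a real number with 0 < τ < 1 − 1/q. Define u : F_q → ℝ by u(0) = √(1−τ) and u(α) = √(τ/(q−1)) for α ≠ 0. Then its normalized Fourier transform û(x) = q^{−1/2} Σ_{y∈F_q} χ_x(y) u(y) satisfies û(0) = √(1−τ^⊥) and û(α) = √(τ^⊥/(q−1)) for every α ≠ 0. -/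
/-- The additive character `χ_y(x) = exp(2πi·tr(x·y)/p)` on `F`, where
`tr : F → ZMod p` is the absolute trace. -/
noncomputable def addChar (p : ℕ) (F : Type*) [Field F] [Fintype F] [Algebra (ZMod p) F]
    (y x : F) : ℂ :=
  Complex.exp (2 * Real.pi * Complex.I *
    ((Algebra.trace (ZMod p) F (x * y)).val : ℂ) / p)

/-- Real-arithmetic identities for the dual noise parameter. -/
lemma bern_arith (q : ℕ) (hq2 : 2 ≤ q) (τ : ℝ) (h0 : 0 < τ) (h1 : τ < 1 - 1 / q) :
    Real.sqrt (1 - tauPerp q τ) * Real.sqrt q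
      = Real.sqrt (1 - τ) + ((q:ℝ) - 1) * Real.sqrt (τ / ((q:ℝ) - 1)) ∧
    Real.sqrt (tauPerp q τ / ((q:ℝ) - 1)) * Real.sqrt q
      = Real.sqrt (1 - τ) - Real.sqrt (τ / ((q:ℝ) - 1)) := by
  have hq'2 : (2:ℝ) ≤ (q:ℝ) := by exact_mod_cast hq2
  set q' : ℝ := (q : ℝ) with hq'
  have hqpos : (0:ℝ) < q' := by linarith
  have hq1 : (0:ℝ) < q' - 1 := by linarith
  have hτ1 : τ < 1 := by
    have : (0:ℝ) < 1/q' := by positivity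
    linarith
  have hkey : τ ≤ (q' - 1) * (1 - τ) := by
    have h1' : τ * q' < (1 - 1/q') * q' := mul_lt_mul_of_pos_right h1 hqpos
    rw [sub_mul, one_mul, one_div, inv_mul_cancel₀ hqpos.ne'] at h1'
    nlinarith
  set A := Real.sqrt (1 - τ) with hA
  set B := Real.sqrt τ with hB
  set Q := Real.sqrt q' with hQ
  set R := Real.sqrt (q' - 1) with hR
  have hA2 : A ^ 2 = 1 - τ := Real.sq_sqrt (by linarith)
  have hB2 : B ^ 2 = τ := Real.sq_sqrt h0.le
  have hQ2 : Q ^ 2 = q' := Real.sq_sqrt hqpos.le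
  have hR2 : R ^ 2 = q' - 1 := Real.sq_sqrt hq1.le
  have hA0 : 0 ≤ A := Real.sqrt_nonneg _
  have hB0 : 0 ≤ B := Real.sqrt_nonneg _
  have hQpos : 0 < Q := Real.sqrt_pos.2 hqpos
  have hRpos : 0 < R := Real.sqrt_pos.2 hq1
  have hBA : B ≤ R * A := by
    rw [hB, hR, hA, ← Real.sqrt_mul hq1.le]
    exact Real.sqrt_le_sqrt hkey
  have hperp : tauPerp q τ = ((R * A - B) / Q) ^ 2 := by
    rw [tauPerp, Real.sqrt_div (mul_nonneg hq1.le (by linarith)) q',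
      Real.sqrt_div h0.le q', Real.sqrt_mul hq1.le]
    rw [← hA, ← hB, ← hQ, ← hR]
    ring
  have hτB : Real.sqrt (τ / (q' - 1)) = B / R := by
    rw [Real.sqrt_div h0.le, ← hB, ← hR]
  constructor
  · have h2 : 1 - tauPerp q τ = ((A + R * B) / Q) ^ 2 := by
      rw [hperp]
      field_simp
      nlinarith [hA2, hB2, hQ2, hR2]
    rw [h2, Real.sqrt_sq (div_nonneg (by positivity) hQpos.le), hτB]
    field_simp
    linear_combination B * hR2
  · have h3 : tauPerp q τ / (q' - 1) = ((R * A - B) / (R * Q)) ^ 2 := by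
      rw [hperp, ← hR2]
      field_simp
    rw [h3, Real.sqrt_sq (div_nonneg (by linarith) (by positivity)), hτB]
    field_simp

/-- The sum of the nontrivial additive character over the field vanishes. -/
lemma addChar_sum_eq_zero (p : ℕ) [Fact p.Prime] (F : Type*) [Field F] [Fintype F]
    [DecidableEq F] [Algebra (ZMod p) F] {x : F} (hx : x ≠ 0) :
    ∑ y : F, addChar p F x y = 0 := by
  haveI : NeZero p := ⟨(Fact.out : p.Prime).ne_zero⟩
  set ψ : AddChar F ℂ := (ZMod.stdAddChar (N := p)).compAddMonoidHom
    ((Algebra.trace (ZMod p) F).toAddMonoidHom.comp (AddMonoidHom.mulLeft x)) with hψ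
  have hchar : ∀ y : F, addChar p F x y = ψ y := by
    intro y
    rw [hψ]
    simp only [AddChar.compAddMonoidHom_apply, AddMonoidHom.comp_apply,
      AddMonoidHom.coe_mulLeft, LinearMap.toAddMonoidHom_coe,
      ZMod.stdAddChar_apply, ZMod.toCircle_apply]
    rw [addChar, mul_comm y x]
  have hψ0 : ψ ≠ 0 := by
    haveI : CharP F p := charP_of_injective_algebraMap (algebraMap (ZMod p) F).injective p
    have htr := (traceForm_nondegenerate (ZMod p) F).1 x
    simp_rw [Algebra.traceForm_apply] at htr
    have hnd : ∃ y : F, Algebra.trace (ZMod p) F (x * y) ≠ 0 := by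
      by_contra! hf; exact hx (htr hf)
    obtain ⟨y, hy⟩ := hnd
    intro h
    apply hy
    have h1 : ψ y = 1 := by rw [h]; simp
    rw [hψ] at h1
    simp only [AddChar.compAddMonoidHom_apply, AddMonoidHom.comp_apply,
      AddMonoidHom.coe_mulLeft, LinearMap.toAddMonoidHom_coe] at h1
    have h2 : ZMod.stdAddChar (Algebra.trace (ZMod p) F (x * y))
        = ZMod.stdAddChar (0 : ZMod p) := by
      rw [h1, AddChar.map_zero_eq_one]
    exact ZMod.injective_stdAddChar h2
  calc ∑ y : F, addChar p F x y = ∑ y : F, ψ y := by simp_rw [hchar]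
    _ = 0 := AddChar.sum_eq_zero_iff_ne_zero.2 hψ0

/-- The normalized Fourier transform of the Bernoulli amplitude
`u(0) = √(1−τ)`, `u(α) = √(τ/(q−1))` (α ≠ 0) is the Bernoulli amplitude with
parameter `τ^⊥`: `û(0) = √(1−τ^⊥)` and `û(α) = √(τ^⊥/(q−1))` for `α ≠ 0`. -/
theorem fourier_bernoulli_amplitude (p : ℕ) [Fact p.Prime] (F : Type*) [Field F] [Fintype F]
    [DecidableEq F] [Algebra (ZMod p) F] (q : ℕ) (hq : Fintype.card F = q)
    (τ : ℝ) (h0 : 0 < τ) (h1 : τ < 1 - 1 / q)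
    (u : F → ℝ) (hu0 : u 0 = Real.sqrt (1 - τ))
    (hu : ∀ α : F, α ≠ 0 → u α = Real.sqrt (τ / ((q : ℝ) - 1)))
    (x : F) :
    (1 / (Real.sqrt q : ℂ)) * ∑ y : F, addChar p F x y * (u y : ℂ)
      = if x = 0 then ((Real.sqrt (1 - tauPerp q τ) : ℝ) : ℂ)
        else ((Real.sqrt (tauPerp q τ / ((q : ℝ) - 1)) : ℝ) : ℂ) := by
  have hq2 : 2 ≤ q := by
    rw [← hq]; exact Fintype.one_lt_card
  obtain ⟨harith0, harith1⟩ := bern_arith q hq2 τ h0 h1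
  have hqR : (0:ℝ) < Real.sqrt q := Real.sqrt_pos.2 (by positivity)
  have hQC : ((Real.sqrt q : ℝ) : ℂ) ≠ 0 := by exact_mod_cast hqR.ne'
  have hcard : (Finset.univ.erase (0:F)).card = q - 1 := by
    rw [Finset.card_erase_of_mem (Finset.mem_univ _), Finset.card_univ, hq]
  have hcastq : ((q - 1 : ℕ) : ℝ) = (q : ℝ) - 1 := by
    have : 1 ≤ q := by omega
    push_cast [this]; ring
  rw [one_div, inv_mul_eq_iff_eq_mul₀ hQC]
  by_cases hx : x = 0
  · subst hx
    rw [if_pos rfl]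
    have hc1 : ∀ y : F, addChar p F (0:F) y = 1 := by
      intro y; simp [addChar]
    have hsum : ∑ y : F, addChar p F (0:F) y * (u y : ℂ)
        = ((Real.sqrt (1 - τ) + ((q:ℝ) - 1) * Real.sqrt (τ / ((q:ℝ) - 1)) : ℝ) : ℂ) := by
      simp_rw [hc1, one_mul]
      rw [← Finset.add_sum_erase Finset.univ _ (Finset.mem_univ (0:F))]
      have : ∑ y ∈ Finset.univ.erase (0:F), ((u y : ℝ) : ℂ)
          = ((q - 1 : ℕ) : ℂ) * ((Real.sqrt (τ / ((q:ℝ) - 1)) : ℝ) : ℂ) := by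
        rw [Finset.sum_congr rfl (fun y hy => by
          rw [hu y (Finset.mem_erase.1 hy).1]), Finset.sum_const, hcard, nsmul_eq_mul]
      rw [this, hu0]
      have hcastqC : ((q - 1 : ℕ) : ℂ) = (q : ℂ) - 1 := by
        have : 1 ≤ q := by omega
        push_cast [this]; ring
      rw [hcastqC]
      push_cast
      ring
    rw [hsum, ← harith0]
    push_cast
    ring
  · rw [if_neg hx]
    have hc0 : addChar p F x 0 = 1 := by simp [addChar]
    have hrest : ∑ y ∈ Finset.univ.erase (0:F), addChar p F x y = -1 := by
      have := addChar_sum_eq_zero p F hx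
      rw [← Finset.add_sum_erase Finset.univ _ (Finset.mem_univ (0:F)), hc0] at this
      linear_combination this
    have hsum : ∑ y : F, addChar p F x y * (u y : ℂ)
        = ((Real.sqrt (1 - τ) - Real.sqrt (τ / ((q:ℝ) - 1)) : ℝ) : ℂ) := by
      rw [← Finset.add_sum_erase Finset.univ _ (Finset.mem_univ (0:F)), hc0, one_mul, hu0]
      have : ∑ y ∈ Finset.univ.erase (0:F), addChar p F x y * (u y : ℂ)
          = ((Real.sqrt (τ / ((q:ℝ) - 1)) : ℝ) : ℂ)
            * ∑ y ∈ Finset.univ.erase (0:F), addChar p F x y := by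
        rw [Finset.mul_sum]
        exact Finset.sum_congr rfl (fun y hy => by
          rw [hu y (Finset.mem_erase.1 hy).1]; ring)
      rw [this, hrest]
      push_cast
      ring
    rw [hsum, ← harith1]
    push_cast
    ring
end

section
/- Let F_q be a finite field of size q, let n ≥ k ≥ 1 be integers, let G : F_q^n → F_q^k be a surjective linear map, let u₀ ∈ F_q^k, let t be a natural number, and suppose there exists z ∈ F_q^n with Gz = u₀ and ‖z‖ = t. Define T = {x ∈ F_q^n : Gx ≠ u₀ or ‖x‖ = t}. Then q^{−k/2} · Σ_{u ∈ F_q^k} √(|{x ∈ T : Gx = u}| / |T|) ≥ 1 − q^{−k}. -/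
/-- The diagonal overlap of the Pretty Good Measurement in Regev's reduction:
with `T = {x : Gx ≠ u₀ or ‖x‖ = t}` the support of the error amplitude,
`Γ = q^{−k/2} · Σ_u √(|{x ∈ T : Gx = u}| / |T|) ≥ 1 − q^{−k}`. -/
theorem pgm_overlap_lower_bound (F : Type*) [Field F] [Fintype F] [DecidableEq F]
    (q : ℕ) (hq : Fintype.card F = q) (n k : ℕ) (hk : 1 ≤ k) (hnk : k ≤ n)
    (G : (Fin n → F) →ₗ[F] (Fin k → F)) (hG : Function.Surjective G)
    (u₀ : Fin k → F) (t : ℕ)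
    (z : Fin n → F) (hz₁ : G z = u₀) (hz₂ : hammingNorm z = t) :
    1 - ((q : ℝ) ^ k)⁻¹
      ≤ (Real.sqrt ((q : ℝ) ^ k))⁻¹ *
        ∑ u : Fin k → F,
          Real.sqrt
            ((Nat.card {x : Fin n → F // (G x ≠ u₀ ∨ hammingNorm x = t) ∧ G x = u} : ℝ)
              / (Nat.card {x : Fin n → F // G x ≠ u₀ ∨ hammingNorm x = t} : ℝ)) := by
  classical
  -- basic positivity of q
  have hq2 : 2 ≤ q := hq ▸ Fintype.one_lt_card
  have hq0 : (0:ℝ) < (q:ℝ)^k := by positivity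
  -- all fibers have the same cardinality
  have hfib : ∀ u : Fin k → F,
      Fintype.card {x : Fin n → F // G x = u} = Fintype.card {x : Fin n → F // G x = 0} := by
    intro u
    obtain ⟨w, hw⟩ := hG u
    refine Fintype.card_congr ⟨fun x => ⟨x.1 - w, by simp [x.2, hw]⟩,
      fun y => ⟨y.1 + w, by have := y.2; simp [map_add, this, hw]⟩, ?_, ?_⟩ <;>
      (intro a; ext; simp)
  set f : ℕ := Fintype.card {x : Fin n → F // G x = 0} with hf
  -- total count
  have htot : q ^ n = q ^ k * f := by
    have h1 : Fintype.card (Fin n → F) = q ^ n := by simp [hq]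
    have h2 : Fintype.card (Σ u : Fin k → F, {x : Fin n → F // G x = u})
        = Fintype.card (Fin n → F) := Fintype.card_congr (Equiv.sigmaFiberEquiv G)
    rw [Fintype.card_sigma] at h2
    simp only [hfib] at h2
    rw [Finset.sum_const, Finset.card_univ] at h2
    simpa [h1, hq, smul_eq_mul] using h2.symm
  have hfpos : 0 < f := by
    refine Fintype.card_pos_iff.mpr ⟨⟨0, by simp⟩⟩
  -- the denominator
  set D : ℕ := Nat.card {x : Fin n → F // G x ≠ u₀ ∨ hammingNorm x = t} with hD
  have hDpos : 0 < D := by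
    rw [hD, Nat.card_eq_fintype_card]
    exact Fintype.card_pos_iff.mpr ⟨⟨z, Or.inr hz₂⟩⟩
  have hDle : D ≤ q ^ n := by
    rw [hD, Nat.card_eq_fintype_card]
    calc Fintype.card {x : Fin n → F // G x ≠ u₀ ∨ hammingNorm x = t}
        ≤ Fintype.card (Fin n → F) := Fintype.card_subtype_le _
      _ = q ^ n := by simp [hq]
  -- numerator for u ≠ u₀
  have hnum : ∀ u : Fin k → F, u ≠ u₀ →
      Nat.card {x : Fin n → F // (G x ≠ u₀ ∨ hammingNorm x = t) ∧ G x = u} = f := by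
    intro u hu
    rw [Nat.card_eq_fintype_card]
    rw [show Fintype.card {x : Fin n → F // (G x ≠ u₀ ∨ hammingNorm x = t) ∧ G x = u}
        = Fintype.card {x : Fin n → F // G x = u} from Fintype.card_congr
          (Equiv.subtypeEquivRight fun x => ⟨fun h => h.2,
            fun h => ⟨Or.inl (by rw [h]; exact hu), h⟩⟩)]
    exact hfib u
  -- key scalar bound: (q^k)⁻¹ ≤ f / D
  have hc : ((q:ℝ)^k)⁻¹ ≤ (f:ℝ) / (D:ℝ) := by
    rw [inv_eq_one_div]
    rw [div_le_div_iff₀ hq0 (by exact_mod_cast hDpos)]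
    have : (D:ℝ) ≤ (q:ℝ)^n := by exact_mod_cast hDle
    calc (1:ℝ) * D ≤ (q:ℝ)^n := by simpa using this
      _ = (f:ℝ) * (q:ℝ)^k := by
          rw [mul_comm]; exact_mod_cast congrArg (Nat.cast (R := ℝ)) htot
  have hcs : (Real.sqrt ((q:ℝ)^k))⁻¹ ≤ Real.sqrt ((f:ℝ) / (D:ℝ)) := by
    rw [← Real.sqrt_inv]
    exact Real.sqrt_le_sqrt hc
  -- lower bound the sum by the sum over u ≠ u₀
  have hsum : ((q:ℝ)^k - 1) * Real.sqrt ((f:ℝ) / (D:ℝ))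
      ≤ ∑ u : Fin k → F,
          Real.sqrt
            ((Nat.card {x : Fin n → F // (G x ≠ u₀ ∨ hammingNorm x = t) ∧ G x = u} : ℝ)
              / (D : ℝ)) := by
    have hsub : ∑ u ∈ Finset.univ.erase u₀,
        Real.sqrt
          ((Nat.card {x : Fin n → F // (G x ≠ u₀ ∨ hammingNorm x = t) ∧ G x = u} : ℝ)
            / (D : ℝ))
        ≤ ∑ u : Fin k → F,
        Real.sqrt
          ((Nat.card {x : Fin n → F // (G x ≠ u₀ ∨ hammingNorm x = t) ∧ G x = u} : ℝ)
            / (D : ℝ)) := by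
      refine Finset.sum_le_sum_of_subset_of_nonneg (Finset.subset_univ _) ?_
      intro i _ _; positivity
    refine le_trans ?_ hsub
    have : ∀ u ∈ Finset.univ.erase u₀,
        Real.sqrt
          ((Nat.card {x : Fin n → F // (G x ≠ u₀ ∨ hammingNorm x = t) ∧ G x = u} : ℝ)
            / (D : ℝ)) = Real.sqrt ((f:ℝ) / (D:ℝ)) := by
      intro u hu
      rw [hnum u (Finset.ne_of_mem_erase hu)]
    rw [Finset.sum_congr rfl this, Finset.sum_const, Finset.card_erase_of_mem (Finset.mem_univ _),
      Finset.card_univ]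
    have hcard : (Fintype.card (Fin k → F) : ℝ) = (q:ℝ)^k := by
      simp [hq]
    rw [nsmul_eq_mul]
    have h1 : ((Fintype.card (Fin k → F) - 1 : ℕ) : ℝ) = (q:ℝ)^k - 1 := by
      have : 1 ≤ Fintype.card (Fin k → F) := Fintype.card_pos
      push_cast [this]
      rw [hcard]
    rw [h1]
  -- finish
  rw [hD] at hsum ⊢
  calc 1 - ((q:ℝ)^k)⁻¹
      = (Real.sqrt ((q:ℝ)^k))⁻¹ * (((q:ℝ)^k - 1) * (Real.sqrt ((q:ℝ)^k))⁻¹) := by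
        rw [mul_comm ((q:ℝ)^k - 1), ← mul_assoc, ← mul_inv,
          Real.mul_self_sqrt hq0.le, mul_comm, sub_mul, one_mul,
          mul_inv_cancel₀ (ne_of_gt hq0)]
    _ ≤ (Real.sqrt ((q:ℝ)^k))⁻¹ * (((q:ℝ)^k - 1) * Real.sqrt ((f:ℝ) / (D:ℝ))) := by
        have hqk1 : (0:ℝ) ≤ (q:ℝ)^k - 1 := by
          have : (1:ℝ) ≤ (q:ℝ)^k := one_le_pow₀ (by exact_mod_cast le_trans (by norm_num) hq2)
          linarith
        have := mul_le_mul_of_nonneg_left hcs hqk1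
        exact mul_le_mul_of_nonneg_left this (by positivity)
    _ ≤ _ := mul_le_mul_of_nonneg_left hsum (by positivity)
end
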